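/- The price of negligence is at most 2: for all L ≥ 0 and 0 ≤ h̄ < h with L + h̄ > 0, 2·(L + h - √((L+h)(L+h̄))) / (h - h̄) ≤ 2, with the bound approached as L → 0 and h̄ → 0. -/

import Mathlib

/-- The price of negligence is at most `2`, with the bound attained in the
limit `L = 0`, `h̄ = 0`. -/
theorem price_of_negligence_le_two
    (h : ℝ) (hh : 0 < h) :
    (∀ L hb : ℝ, 0 ≤ L → 0 ≤ hb → hb < h → 0 < L + hb →
      2 * (L + h - Real.sqrt ((L + h) * (L + hb))) / (h - hb) ≤ 2) ∧
    2 * (0 + h - Real.sqrt ((0 + h) * (0 + 0))) / (h - 0) = 2 := by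
  constructor
  · intro L hb hL hhb hlt hpos
    have hden : 0 < h - hb := by linarith
    rw [div_le_iff₀ hden]
    have key : L + hb ≤ Real.sqrt ((L + h) * (L + hb)) := by
      have h1 : Real.sqrt ((L + hb) * (L + hb)) ≤ Real.sqrt ((L + h) * (L + hb)) := by
        apply Real.sqrt_le_sqrt
        nlinarith
      rwa [Real.sqrt_mul_self hpos.le] at h1
    nlinarith
  · rw [add_zero, mul_zero, Real.sqrt_zero]
    field_simp
    simp [hh.ne']
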